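/- arXiv:2110.13307 — 3 statements merged into one kernel-verified Lean document; each statement's English description precedes it below -/
import Mathlib

section
/- For the pairwise-comparison process with two strategies A and B in a population of size N ≥ 2 and selection intensity β, the ratio of fixation probabilities satisfies ρ_{B,A} / ρ_{A,B} = exp(β · Σ_{k=1}^{N−1} (Π_A(k) − Π_B(k))). -/
open Finset Real

/-- Average payoff of strategy A when `k` individuals (out of `N`) use A,
given pairwise payoffs `πAA` (A vs A) and `πAB` (A vs B). -/
noncomputable def PiA (N : ℕ) (pAA pAB : ℝ) (k : ℕ) : ℝ :=
  (((k : ℝ) - 1) * pAA + ((N : ℝ) - (k : ℝ)) * pAB) / ((N : ℝ) - 1)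

/-- Average payoff of strategy B when `k` individuals (out of `N`) use A,
given pairwise payoffs `πBA` (B vs A) and `πBB` (B vs B). -/
noncomputable def PiB (N : ℕ) (pBA pBB : ℝ) (k : ℕ) : ℝ :=
  ((k : ℝ) * pBA + ((N : ℝ) - (k : ℝ) - 1) * pBB) / ((N : ℝ) - 1)

/-- Fixation probability `ρ_{B,A}` of a single A-mutant in a population of `N − 1`
B-players under the pairwise-comparison rule with selection intensity `β`, where
`πAA, πAB, πBA, πBB` are the pairwise payoffs.  (The fixation probability `ρ_{A,B}`
of a single B-mutant among A-players is obtained by exchanging the roles of A and B,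
i.e. `rhoFix N β πBB πBA πAB πAA`.) -/
noncomputable def rhoFix (N : ℕ) (β pAA pAB pBA pBB : ℝ) : ℝ :=
  (1 + ∑ i ∈ Finset.Icc 1 (N - 1), ∏ j ∈ Finset.Icc 1 i,
      Real.exp (-β * (PiA N pAA pAB j - PiB N pBA pBB j)))⁻¹

private lemma denom_core (n : ℕ) (hn : 1 ≤ n) (g : ℕ → ℝ) :
    1 + ∑ i ∈ Finset.Icc 1 n, ∏ j ∈ Finset.Icc 1 i, Real.exp (g (n + 1 - j))
      = Real.exp (∑ k ∈ Finset.Icc 1 n, g k) *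
        (1 + ∑ i ∈ Finset.Icc 1 n, ∏ j ∈ Finset.Icc 1 i, Real.exp (-g j)) := by
  set T : ℝ := Real.exp (∑ k ∈ Finset.Icc 1 n, g k) with hT
  set q : ℕ → ℝ := fun m => Real.exp (-∑ j ∈ Finset.Icc 1 m, g j) with hq
  have hq0 : q 0 = 1 := by simp [hq]
  have hTqn : T * q n = 1 := by
    rw [hT, hq, ← Real.exp_add]; simp
  have key : ∀ i ∈ Finset.Icc 1 n,
      (∏ j ∈ Finset.Icc 1 i, Real.exp (g (n + 1 - j))) = T * q (n - i) := by
    intro i hi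
    simp only [Finset.mem_Icc] at hi
    rw [← Real.exp_sum, hT, hq, ← Real.exp_add]
    congr 1
    have h1 : ∑ j ∈ Finset.Icc 1 i, g (n + 1 - j)
        = ∑ k ∈ Finset.Icc (n - i + 1) n, g k := by
      apply Finset.sum_nbij' (fun j => n + 1 - j) (fun k => n + 1 - k) <;>
        intros <;> simp_all [Finset.mem_Icc] <;> omega
    have h2 : (∑ j ∈ Finset.Icc 1 (n - i), g j) + ∑ k ∈ Finset.Icc (n - i + 1) n, g k
        = ∑ k ∈ Finset.Icc 1 n, g k := by
      have e1 : Finset.Icc 1 (n - i) = Finset.Ioc 0 (n - i) := by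
        ext x; simp [Finset.mem_Icc, Finset.mem_Ioc]; omega
      have e2 : Finset.Icc (n - i + 1) n = Finset.Ioc (n - i) n := by
        ext x; simp [Finset.mem_Icc, Finset.mem_Ioc]
      have e3 : Finset.Icc 1 n = Finset.Ioc 0 n := by
        ext x; simp [Finset.mem_Icc, Finset.mem_Ioc]; omega
      rw [e1, e2, e3]
      exact Finset.sum_Ioc_consecutive _ (by omega) (by omega)
    linarith [h1, h2]
  rw [Finset.sum_congr rfl key]
  have hprod : ∀ i ∈ Finset.Icc 1 n,
      (∏ j ∈ Finset.Icc 1 i, Real.exp (-g j)) = q i := by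
    intro i _
    rw [hq, ← Real.exp_sum]
    congr 1
    simp
  rw [Finset.sum_congr rfl hprod]
  have hrefl : ∑ i ∈ Finset.Icc 1 n, q (n - i) = ∑ m ∈ Finset.Icc 0 (n - 1), q m := by
    apply Finset.sum_nbij' (fun i => n - i) (fun m => n - m) <;>
      intros <;> simp_all [Finset.mem_Icc] <;> omega
  have hsplit : (∑ m ∈ Finset.Icc 0 (n - 1), q m) + q n
      = q 0 + ∑ m ∈ Finset.Icc 1 n, q m := by
    have h1 : (∑ m ∈ Finset.Icc 0 (n - 1), q m) + q n = ∑ m ∈ Finset.Icc 0 n, q m := by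
      have : n = (n - 1) + 1 := by omega
      rw [this, Finset.sum_Icc_succ_top (by omega)]
      simp
    have h2 : Finset.Icc 0 n = insert 0 (Finset.Icc 1 n) := by
      ext x; simp [Finset.mem_Icc]; omega
    rw [h1, h2, Finset.sum_insert (by simp)]
  rw [← Finset.mul_sum, hrefl]
  linear_combination T * hsplit - hTqn + T * hq0

/-- **Ratio of fixation probabilities for the pairwise-comparison process.**
For two strategies A and B in a population of size `N ≥ 2` with selection
intensity `β`, `ρ_{B,A} / ρ_{A,B} = exp(β · Σ_{k=1}^{N−1} (Π_A(k) − Π_B(k)))`. -/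
theorem fixation_prob_ratio (N : ℕ) (hN : 2 ≤ N) (β pAA pAB pBA pBB : ℝ) :
    rhoFix N β pAA pAB pBA pBB / rhoFix N β pBB pBA pAB pAA
      = Real.exp (β * ∑ k ∈ Finset.Icc 1 (N - 1),
          (PiA N pAA pAB k - PiB N pBA pBB k)) := by
  have hn : 1 ≤ N - 1 := by omega
  set g : ℕ → ℝ := fun k => β * (PiA N pAA pAB k - PiB N pBA pBB k) with hg
  have e1 : ∀ i ∈ Finset.Icc 1 (N - 1),
      (∏ j ∈ Finset.Icc 1 i, Real.exp (-β * (PiA N pBB pBA j - PiB N pAB pAA j)))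
        = ∏ j ∈ Finset.Icc 1 i, Real.exp (g ((N - 1) + 1 - j)) := by
    intro i hi
    apply Finset.prod_congr rfl
    intro j hj
    simp only [Finset.mem_Icc] at hi hj
    have hj1 : (N - 1) + 1 - j = N - j := by omega
    have hc : ((N - j : ℕ) : ℝ) = (N : ℝ) - (j : ℝ) := by
      rw [Nat.cast_sub (by omega)]
    rw [hj1, hg]
    congr 1
    simp only [PiA, PiB, hc]
    ring
  have hden : (1 + ∑ i ∈ Finset.Icc 1 (N - 1), ∏ j ∈ Finset.Icc 1 i,
        Real.exp (-β * (PiA N pBB pBA j - PiB N pAB pAA j)))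
      = Real.exp (β * ∑ k ∈ Finset.Icc 1 (N - 1),
          (PiA N pAA pAB k - PiB N pBA pBB k)) *
        (1 + ∑ i ∈ Finset.Icc 1 (N - 1), ∏ j ∈ Finset.Icc 1 i,
          Real.exp (-β * (PiA N pAA pAB j - PiB N pBA pBB j))) := by
    rw [Finset.sum_congr rfl e1]
    have := denom_core (N - 1) hn g
    rw [this]
    rw [Finset.mul_sum]
    simp only [hg, neg_mul]
  have hDpos : 0 < 1 + ∑ i ∈ Finset.Icc 1 (N - 1), ∏ j ∈ Finset.Icc 1 i,
      Real.exp (-β * (PiA N pAA pAB j - PiB N pBA pBB j)) := by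
    positivity
  rw [rhoFix, rhoFix, inv_div_inv, hden, mul_div_assoc, div_self (ne_of_gt hDpos), mul_one]
end

section
/- For the pairwise-comparison process with two strategies A and B in a population of size N ≥ 2 and selection intensity β > 0, the fixation probability of a single A-mutant among B-players exceeds that of a single B-mutant among A-players, ρ_{B,A} > ρ_{A,B}, if and only if (N−2)(π_AA − π_BB) + N(π_AB − π_BA) > 0. -/
open Finset Real

lemma sum_Icc_id_real (m : ℕ) : ∑ j ∈ Finset.Icc 1 m, (j:ℝ) = m*(m+1)/2 := by
  induction m with
  | zero => simp
  | succ k ih =>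
    rw [Finset.sum_Icc_succ_top (by omega : 1 ≤ k+1), ih]
    push_cast; ring

lemma sum_Icc_one_eq_range (g : ℕ → ℝ) (n : ℕ) :
    ∑ i ∈ Finset.Icc 1 n, g i = ∑ i ∈ Finset.range n, g (1 + i) := by
  rw [show Finset.Icc 1 n = Finset.Ico 1 (n+1) by rfl, Finset.sum_Ico_eq_sum_range]
  simp

/-- **Comparison of fixation probabilities.**
For the pairwise-comparison process with two strategies A and B in a population of
size `N ≥ 2` and selection intensity `β > 0`, the fixation probability of a single
A-mutant among B-players exceeds that of a single B-mutant among A-players,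
`ρ_{B,A} > ρ_{A,B}`, iff `(N−2)(π_AA − π_BB) + N(π_AB − π_BA) > 0`. -/
theorem fixation_prob_comparison (N : ℕ) (hN : 2 ≤ N) (β : ℝ) (hβ : 0 < β)
    (pAA pAB pBA pBB : ℝ) :
    rhoFix N β pAA pAB pBA pBB > rhoFix N β pBB pBA pAB pAA
      ↔ ((N : ℝ) - 2) * (pAA - pBB) + (N : ℝ) * (pAB - pBA) > 0 := by
  obtain ⟨m, rfl⟩ : ∃ m, N = m + 2 := ⟨N - 2, by omega⟩
  set d : ℕ → ℝ := fun j => PiA (m+2) pAA pAB j - PiB (m+2) pBA pBB j with hd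
  set F : ℕ → ℝ := fun i => ∑ j ∈ Finset.Icc 1 i, d j with hF
  set D : ℝ := F (m+1) with hDdef
  have hm1 : ((m:ℝ) + 1) ≠ 0 := by positivity
  have hF0 : F 0 = 0 := by simp [hF]
  -- value of D
  have hdj : ∀ j : ℕ, d j = ((pAA - pAB - pBA + pBB) * (j:ℝ)
      + (-pAA + ((m:ℝ)+2)*pAB - ((m:ℝ)+1)*pBB)) / ((m:ℝ)+1) := by
    intro j
    simp only [hd, PiA, PiB]
    push_cast
    rw [div_sub_div_same, show ((m:ℝ)+2-1) = (m:ℝ)+1 from by ring]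
    congr 1
    ring
  have hD : D = ((m:ℝ) * (pAA - pBB) + ((m:ℝ)+2)*(pAB - pBA))/2 := by
    rw [hDdef]
    simp only [hF]
    rw [Finset.sum_congr rfl (fun j _ => hdj j), ← Finset.sum_div,
      Finset.sum_add_distrib, ← Finset.mul_sum, sum_Icc_id_real,
      Finset.sum_const, Nat.card_Icc, nsmul_eq_mul]
    push_cast
    field_simp
    ring
  -- swapped increments
  have hswap : ∀ j : ℕ, j ≤ m + 2 →
      PiA (m+2) pBB pBA j - PiB (m+2) pAB pAA j = -(d (m + 2 - j)) := by
    intro j hj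
    have hc : ((m + 2 - j : ℕ) : ℝ) = (m:ℝ) + 2 - (j:ℝ) := by
      push_cast [Nat.cast_sub hj]; ring
    simp only [hd, PiA, PiB, hc]
    push_cast
    rw [div_sub_div_same, div_sub_div_same, show ((m:ℝ)+2-1) = (m:ℝ)+1 from by ring,
      ← neg_div]
    congr 1
    ring
  -- products as exponentials
  have hprod1 : ∀ i : ℕ,
      (∏ j ∈ Finset.Icc 1 i, Real.exp (-β * (PiA (m+2) pAA pAB j - PiB (m+2) pBA pBB j)))
        = Real.exp (-β * F i) := by
    intro i
    rw [← Real.exp_sum, hF, Finset.mul_sum]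
  have hsplit : ∀ i : ℕ, i ≤ m + 1 →
      (∑ j ∈ Finset.Icc 1 i, d (m + 2 - j)) = D - F (m + 1 - i) := by
    intro i hi
    induction i with
    | zero => simp [hDdef]
    | succ k ih =>
      rw [Finset.sum_Icc_succ_top (by omega : 1 ≤ k+1), ih (by omega)]
      have h1 : m + 2 - (k+1) = (m - k) + 1 := by omega
      have h2 : m + 1 - k = (m - k) + 1 := by omega
      have h3 : m + 1 - (k+1) = m - k := by omega
      rw [h1, h3, h2, show F ((m-k)+1) = F (m-k) + d ((m-k)+1) from
        Finset.sum_Icc_succ_top (by omega) d]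
      ring
  have hprod2 : ∀ i : ℕ, i ≤ m + 1 →
      (∏ j ∈ Finset.Icc 1 i, Real.exp (-β * (PiA (m+2) pBB pBA j - PiB (m+2) pAB pAA j)))
        = Real.exp (β * (D - F (m + 1 - i))) := by
    intro i hi
    have hterm : ∀ j ∈ Finset.Icc 1 i,
        -β * (PiA (m+2) pBB pBA j - PiB (m+2) pAB pAA j) = β * d (m + 2 - j) := by
      intro j hj
      rw [hswap j (by have := (Finset.mem_Icc.mp hj).2; omega)]
      ring
    rw [← Real.exp_sum, Finset.sum_congr rfl hterm, ← Finset.mul_sum, hsplit i hi]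
  -- the two sums
  set S₁ : ℝ := ∑ i ∈ Finset.Icc 1 (m+1), ∏ j ∈ Finset.Icc 1 i,
      Real.exp (-β * (PiA (m+2) pAA pAB j - PiB (m+2) pBA pBB j)) with hS₁
  set S₂ : ℝ := ∑ i ∈ Finset.Icc 1 (m+1), ∏ j ∈ Finset.Icc 1 i,
      Real.exp (-β * (PiA (m+2) pBB pBA j - PiB (m+2) pAB pAA j)) with hS₂
  have hS₁' : S₁ = ∑ i ∈ Finset.range (m+1), Real.exp (-β * F (1+i)) := by
    rw [hS₁, Finset.sum_congr rfl (fun i _ => hprod1 i), sum_Icc_one_eq_range]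
  have hS₂' : S₂ = Real.exp (β * D) * ∑ i ∈ Finset.range (m+1), Real.exp (-β * F i) := by
    rw [hS₂, Finset.sum_congr rfl (fun i hi => hprod2 i (Finset.mem_Icc.mp hi).2),
      sum_Icc_one_eq_range]
    have e0 : ∀ i ∈ Finset.range (m+1),
        Real.exp (β * (D - F (m + 1 - (1 + i)))) = Real.exp (β * (D - F (m + 1 - 1 - i))) := by
      intro i hi
      have : m + 1 - (1 + i) = m + 1 - 1 - i := by omega
      rw [this]
    rw [Finset.sum_congr rfl e0,
      Finset.sum_range_reflect (fun i => Real.exp (β * (D - F i))) (m+1),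
      Finset.mul_sum]
    refine Finset.sum_congr rfl fun i _ => ?_
    rw [← Real.exp_add]
    congr 1
    ring
  -- key identity : 1 + S₂ = exp (β D) * (1 + S₁)
  have hkey : 1 + S₂ = Real.exp (β * D) * (1 + S₁) := by
    rw [hS₁', hS₂']
    have e1 : (1:ℝ) + ∑ i ∈ Finset.range (m+1), Real.exp (-β * F (1+i))
        = ∑ i ∈ Finset.range (m+2), Real.exp (-β * F i) := by
      rw [Finset.sum_range_succ' (fun i => Real.exp (-β * F i)) (m+1)]
      rw [hF0]
      simp [add_comm]
    have e2 : ∑ i ∈ Finset.range (m+2), Real.exp (-β * F i)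
        = Real.exp (-β * D) + ∑ i ∈ Finset.range (m+1), Real.exp (-β * F i) := by
      rw [Finset.sum_range_succ, hDdef]
      ring
    rw [e1, e2, mul_add, ← Real.exp_add,
      show β * D + -β * D = (0:ℝ) from by ring, Real.exp_zero]
  -- positivity
  have hpos1 : (0:ℝ) < 1 + S₁ := by
    have : 0 ≤ S₁ := Finset.sum_nonneg fun i _ => Finset.prod_nonneg fun j _ => (Real.exp_pos _).le
    linarith
  have hpos2 : (0:ℝ) < 1 + S₂ := by
    have : 0 ≤ S₂ := Finset.sum_nonneg fun i _ => Finset.prod_nonneg fun j _ => (Real.exp_pos _).le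
    linarith
  have hrho1 : rhoFix (m+2) β pAA pAB pBA pBB = (1 + S₁)⁻¹ := rfl
  have hrho2 : rhoFix (m+2) β pBB pBA pAB pAA = (1 + S₂)⁻¹ := rfl
  rw [hrho1, hrho2, gt_iff_lt, inv_lt_inv₀ hpos2 hpos1, hkey]
  have step1 : (1 + S₁ < Real.exp (β * D) * (1 + S₁)) ↔ 1 < Real.exp (β * D) := by
    constructor
    · intro h
      by_contra hc
      push_neg at hc
      nlinarith
    · intro h
      nlinarith
  rw [step1, Real.one_lt_exp_iff, mul_pos_iff_of_pos_left hβ, hD]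
  push_cast
  constructor <;> intro h <;> nlinarith
end

section
/- Fix pairwise payoffs π_AA, π_AB, π_BA, π_BB and selection intensity β > 0 for the pairwise-comparison process. If π_AA + π_AB > π_BA + π_BB, then there exists N₀ such that for all population sizes N ≥ N₀, the fixation probabilities satisfy ρ_{B,A} > ρ_{A,B}; that is, in the limit of large N the risk-dominance condition π_AA + π_AB > π_BA + π_BB implies that the transition from B to A is stronger than the reverse. -/
open Finset Real

/-- Payoff difference in "numerator" form. -/
lemma Dform (N : ℕ) (a b c d : ℝ) (j : ℕ) :
    PiA N a b j - PiB N c d j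
      = (((j : ℝ) - 1) * (a - c) + ((N : ℝ) - (j : ℝ) - 1) * (b - d) + (b - c))
          / ((N : ℝ) - 1) := by
  unfold PiA PiB
  rw [div_sub_div_same]
  congr 1
  ring

/-- Anti-symmetry of the payoff difference under exchanging the strategies. -/
lemma Dsym (N j : ℕ) (hj : j ≤ N) (a b c d : ℝ) (hN : ((N : ℝ) - 1) ≠ 0) :
    PiA N d c j - PiB N b a j = -(PiA N a b (N - j) - PiB N c d (N - j)) := by
  have hc : ((N - j : ℕ) : ℝ) = (N : ℝ) - (j : ℝ) := by
    rw [Nat.cast_sub hj]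
  unfold PiA PiB
  rw [hc]
  field_simp
  ring

set_option maxHeartbeats 1000000 in
/-- **Risk dominance implies stronger transition for large populations.**
If `π_AA + π_AB > π_BA + π_BB` (risk dominance of A over B), then for all
sufficiently large population sizes `N`, the fixation probability of a single
A-mutant among B-players exceeds that of a single B-mutant among A-players:
`ρ_{B,A} > ρ_{A,B}`. -/
theorem risk_dominance_large_N (β : ℝ) (hβ : 0 < β) (pAA pAB pBA pBB : ℝ)
    (hrd : pAA + pAB > pBA + pBB) :
    ∃ N₀ : ℕ, ∀ N : ℕ, N₀ ≤ N →
      rhoFix N β pAA pAB pBA pBB > rhoFix N β pBB pBA pAB pAA := by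
  obtain ⟨ε, hεdef⟩ : ∃ e : ℝ, e = pAA + pAB - pBA - pBB := ⟨_, rfl⟩
  have hε0 : 0 < ε := by rw [hεdef]; linarith
  obtain ⟨C, hCdef⟩ : ∃ c : ℝ, c = |pAA - pBA| + |pAB - pBB| + |pAB - pBA| := ⟨_, rfl⟩
  have hC0 : 0 ≤ C := by rw [hCdef]; positivity
  obtain ⟨M, hM⟩ := exists_nat_gt ((2 * (pAA - pBB) + 2 * C) / ε)
  refine ⟨max 2 M, fun N hN => ?_⟩
  have hN2 : 2 ≤ N := le_trans (le_max_left _ _) hN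
  have hNM : (M : ℝ) ≤ N := Nat.cast_le.2 (le_trans (le_max_right _ _) hN)
  have hNε : 2 * (pAA - pBB) + 2 * C < (N : ℝ) * ε := by
    have h := lt_of_lt_of_le hM hNM
    have := (div_lt_iff₀ hε0).mp h
    linarith
  have hNR : (2 : ℝ) ≤ (N : ℝ) := by exact_mod_cast hN2
  have h1 : (0 : ℝ) < (N : ℝ) - 1 := by linarith
  have h1' : ((N : ℝ) - 1) ≠ 0 := ne_of_gt h1
  have hNm1 : ((N - 1 : ℕ) : ℝ) = (N : ℝ) - 1 := by
    rw [Nat.cast_sub (by omega : 1 ≤ N)]; norm_num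
  set D : ℕ → ℝ := fun j => PiA N pAA pAB j - PiB N pBA pBB j with hDdef
  set P : ℕ → ℝ := fun m => ∑ j ∈ Finset.Ioc 0 m, D j with hPdef
  -- value of the total sum Q = P (N-1)
  have hQrev : ∑ j ∈ Finset.Icc 1 (N - 1), D (N - j) = P (N - 1) := by
    rw [hPdef]
    simp only [← Finset.Icc_add_one_left_eq_Ioc, Nat.succ_eq_add_one, zero_add]
    refine Finset.sum_nbij' (fun j => N - j) (fun j => N - j) ?_ ?_ ?_ ?_ ?_
    · intro a ha; simp only [Finset.mem_Icc] at *; omega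
    · intro a ha; simp only [Finset.mem_Icc] at *; omega
    · intro a ha; simp only [Finset.mem_Icc] at ha; show N - (N - a) = a; omega
    · intro a ha; simp only [Finset.mem_Icc] at ha; show N - (N - a) = a; omega
    · intro a _; rfl
  have hpair : ∀ j ∈ Finset.Icc 1 (N - 1),
      D j + D (N - j) = ((N : ℝ) * ε - 2 * (pAA - pBB)) / ((N : ℝ) - 1) := by
    intro j hj
    simp only [Finset.mem_Icc] at hj
    have hjN : j ≤ N := by omega
    have hc : ((N - j : ℕ) : ℝ) = (N : ℝ) - (j : ℝ) := by rw [Nat.cast_sub hjN]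
    simp only [hDdef, Dform, hc, ← add_div]
    congr 1
    rw [hεdef]
    ring
  have hQval : P (N - 1) = ((N : ℝ) * ε - 2 * (pAA - pBB)) / 2 := by
    have htwo : P (N - 1) + P (N - 1)
        = ∑ j ∈ Finset.Icc 1 (N - 1), (D j + D (N - j)) := by
      rw [Finset.sum_add_distrib, hQrev, hPdef]
      simp only [← Finset.Icc_add_one_left_eq_Ioc, Nat.succ_eq_add_one, zero_add]
    rw [Finset.sum_congr rfl hpair, Finset.sum_const, Nat.card_Icc] at htwo
    have hcard : ((N - 1 + 1 - 1 : ℕ) : ℝ) = (N : ℝ) - 1 := by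
      rw [show N - 1 + 1 - 1 = N - 1 from rfl, hNm1]
    have h2 : P (N - 1) + P (N - 1)
        = ((N : ℝ) - 1) * (((N : ℝ) * ε - 2 * (pAA - pBB)) / ((N : ℝ) - 1)) := by
      rw [htwo, nsmul_eq_mul, hcard]
    rw [mul_div_cancel₀ _ h1'] at h2
    linear_combination h2 / 2
  -- lower bound on D and positivity of Q + D i
  have hkey : ∀ i ∈ Finset.Icc 1 (N - 1), 0 < P (N - 1) + D i := by
    intro i hi
    simp only [Finset.mem_Icc] at hi
    have hi1 : (1 : ℝ) ≤ (i : ℝ) := by exact_mod_cast hi.1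
    have hi2 : (i : ℝ) ≤ (N : ℝ) - 1 := by
      rw [← hNm1]; exact_mod_cast hi.2
    have hDlb : -C ≤ D i := by
      simp only [hDdef, Dform]
      rw [le_div_iff₀ h1]
      have t1 : -(((N : ℝ) - 1) * |pAA - pBA|) ≤ ((i : ℝ) - 1) * (pAA - pBA) := by
        nlinarith [neg_abs_le (pAA - pBA), abs_nonneg (pAA - pBA), le_abs_self (pAA - pBA)]
      have t2 : -(((N : ℝ) - 1) * |pAB - pBB|) ≤ ((N : ℝ) - (i : ℝ) - 1) * (pAB - pBB) := by
        nlinarith [neg_abs_le (pAB - pBB), abs_nonneg (pAB - pBB), le_abs_self (pAB - pBB)]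
      have t3 : -(((N : ℝ) - 1) * |pAB - pBA|) ≤ (pAB - pBA) := by
        nlinarith [neg_abs_le (pAB - pBA), abs_nonneg (pAB - pBA)]
      simp only [hCdef]
      nlinarith [t1, t2, t3]
    have hQC : C < P (N - 1) := by
      rw [hQval]; linarith
    linarith
  -- rewrite both fixation probabilities
  have hSrw : rhoFix N β pAA pAB pBA pBB
      = (1 + ∑ i ∈ Finset.Icc 1 (N - 1), Real.exp (-β * P i))⁻¹ := by
    unfold rhoFix
    congr 2
    refine Finset.sum_congr rfl (fun i hi => ?_)
    rw [← Real.exp_sum]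
    congr 1
    rw [hPdef]
    simp only [← Finset.Icc_add_one_left_eq_Ioc, Nat.succ_eq_add_one, zero_add, Finset.mul_sum]
    rfl
  have hS'rw : rhoFix N β pBB pBA pAB pAA
      = (1 + ∑ i ∈ Finset.Icc 1 (N - 1),
          Real.exp (β * (P (N - 1) - P (i - 1))))⁻¹ := by
    unfold rhoFix
    congr 2
    have step1 : ∀ i ∈ Finset.Icc 1 (N - 1),
        (∏ j ∈ Finset.Icc 1 i, Real.exp (-β * (PiA N pBB pBA j - PiB N pAB pAA j)))
          = Real.exp (β * (P (N - 1) - P (N - 1 - i))) := by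
      intro i hi
      simp only [Finset.mem_Icc] at hi
      rw [← Real.exp_sum]
      congr 1
      have hterm : ∀ j ∈ Finset.Icc 1 i,
          -β * (PiA N pBB pBA j - PiB N pAB pAA j) = β * D (N - j) := by
        intro j hj
        simp only [Finset.mem_Icc] at hj
        rw [Dsym N j (by omega) pAA pAB pBA pBB h1']
        ring
      rw [Finset.sum_congr rfl hterm]
      have hre : ∑ j ∈ Finset.Icc 1 i, β * D (N - j)
          = ∑ k ∈ Finset.Ioc (N - 1 - i) (N - 1), β * D k := by
        refine Finset.sum_nbij' (fun j => N - j) (fun k => N - k) ?_ ?_ ?_ ?_ ?_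
        · intro a ha; simp only [Finset.mem_Icc, Finset.mem_Ioc] at *; omega
        · intro a ha; simp only [Finset.mem_Icc, Finset.mem_Ioc] at *; omega
        · intro a ha; simp only [Finset.mem_Icc] at ha; show N - (N - a) = a; omega
        · intro a ha; simp only [Finset.mem_Ioc] at ha; show N - (N - a) = a; omega
        · intro a _; rfl
      rw [hre, ← Finset.mul_sum]
      have hsplit : P (N - 1 - i) + ∑ k ∈ Finset.Ioc (N - 1 - i) (N - 1), D k
          = P (N - 1) := by
        rw [hPdef]
        exact Finset.sum_Ioc_consecutive D (by omega) (by omega)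
      have : ∑ k ∈ Finset.Ioc (N - 1 - i) (N - 1), D k = P (N - 1) - P (N - 1 - i) := by
        linarith
      rw [this]
    rw [Finset.sum_congr rfl step1]
    refine Finset.sum_nbij' (fun i => N - i) (fun i => N - i) ?_ ?_ ?_ ?_ ?_
    · intro a ha; simp only [Finset.mem_Icc] at *; omega
    · intro a ha; simp only [Finset.mem_Icc] at *; omega
    · intro a ha; simp only [Finset.mem_Icc] at ha; show N - (N - a) = a; omega
    · intro a ha; simp only [Finset.mem_Icc] at ha; show N - (N - a) = a; omega
    · intro a ha
      simp only [Finset.mem_Icc] at ha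
      have h' : N - 1 - a = N - a - 1 := by omega
      rw [h']
  -- termwise comparison
  have hnonempty : (Finset.Icc 1 (N - 1)).Nonempty := by
    refine ⟨1, ?_⟩; simp only [Finset.mem_Icc]; omega
  have hlt : ∑ i ∈ Finset.Icc 1 (N - 1), Real.exp (-β * P i)
      < ∑ i ∈ Finset.Icc 1 (N - 1), Real.exp (β * (P (N - 1) - P (i - 1))) := by
    refine Finset.sum_lt_sum_of_nonempty hnonempty (fun i hi => ?_)
    have hmem := hi
    simp only [Finset.mem_Icc] at hmem
    have hPi : P i = P (i - 1) + D i := by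
      simp only [hPdef]
      have : i = (i - 1) + 1 := by omega
      rw [this, Finset.sum_Ioc_succ_top (by omega : 0 ≤ i - 1) D, ← this]
    rw [Real.exp_lt_exp]
    have := hkey i hi
    nlinarith
  rw [hSrw, hS'rw]
  have hpos : 0 < 1 + ∑ i ∈ Finset.Icc 1 (N - 1), Real.exp (-β * P i) := by
    have : (0:ℝ) ≤ ∑ i ∈ Finset.Icc 1 (N - 1), Real.exp (-β * P i) :=
      Finset.sum_nonneg (fun i _ => (Real.exp_pos _).le)
    linarith
  exact inv_strictAnti₀ hpos (by linarith)
end
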